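/- Let f : X → Y and g : Z → Y be continuous maps of topological spaces, let T = Z ×_Y X = {(z, x) ∈ Z × X : g(z) = f(x)} with the subspace topology of the product, and let f′ : T → Z be the first projection (the base change of f along g). If g is a surjective local homeomorphism and f′ is a proper map, then f is a proper map. -/

import Mathlib

/-- Properness is local on the base: if the base change `f'` of a continuous map
`f : X → Y` along a surjective local homeomorphism `g : Z → Y` is a proper map,
then so is `f`. -/
theorem isProperMap_of_base_change {X Y Z : Type*}
    [TopologicalSpace X] [TopologicalSpace Y] [TopologicalSpace Z]
    (f : X → Y) (g : Z → Y) (hf : Continuous f) (hg : IsLocalHomeomorph g)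
    (hgs : Function.Surjective g)
    (hf' : IsProperMap
      (fun p : {p : Z × X // g p.1 = f p.2} => (p : Z × X).1)) :
    IsProperMap f := by
  rw [isProperMap_iff_ultrafilter]
  refine ⟨hf, fun F y hFy => ?_⟩
  obtain ⟨z, hzy⟩ := hgs y
  obtain ⟨e, hz, rfl⟩ := hg z
  -- now g = e
  have hyt : y ∈ e.target := hzy ▸ e.map_source hz
  set A : Set X := f ⁻¹' e.target with hA
  have hAF : A ∈ F := hFy (e.open_target.mem_nhds hyt)
  have hrange : Set.range (Subtype.val : A → X) ∈ F := by
    rwa [Subtype.range_coe]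
  let F₁ : Ultrafilter A := F.comap Subtype.val_injective hrange
  have hmapF₁ : F₁.map (Subtype.val) = F := Ultrafilter.coe_injective <| by
    simp [F₁, Filter.map_comap_of_mem hrange]
  let φ : A → {p : Z × X // (e : Z → Y) p.1 = f p.2} :=
    fun x => ⟨(e.symm (f x.1), x.1), e.right_inv x.2⟩
  let G : Ultrafilter {p : Z × X // (e : Z → Y) p.1 = f p.2} := F₁.map φ
  have hval : Filter.Tendsto Subtype.val (F₁ : Filter A) F :=
    le_of_eq (congrArg Ultrafilter.toFilter hmapF₁)
  have hfval : Filter.Tendsto (fun x : A => f x.1) F₁ (nhds y) := hFy.comp hval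
  have hGz : Filter.Tendsto
      (fun p : {p : Z × X // (e : Z → Y) p.1 = f p.2} => (p : Z × X).1) G (nhds z) := by
    have hsymm : Filter.Tendsto e.symm (nhds y) (nhds z) := by
      have := e.continuousAt_symm hyt
      rw [ContinuousAt] at this
      rwa [show e.symm y = z from hzy ▸ e.left_inv hz] at this
    have : Filter.Tendsto (fun x : A => e.symm (f x.1)) F₁ (nhds z) :=
      hsymm.comp hfval
    simpa [G, Filter.Tendsto, Filter.map_map, Function.comp_def, φ] using this
  obtain ⟨⟨⟨z', x⟩, hpt⟩, hfx, hG⟩ := (isProperMap_iff_ultrafilter.mp hf').2 hGz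
  simp only at hfx
  subst hfx
  refine ⟨x, hpt ▸ hzy, ?_⟩
  have hsnd : Filter.Tendsto
      (fun p : {p : Z × X // (e : Z → Y) p.1 = f p.2} => (p : Z × X).2) G (nhds x) := by
    exact ((continuous_snd.comp continuous_subtype_val).tendsto _).comp hG
  have : (G : Filter _).map (fun p : {p : Z × X // (e : Z → Y) p.1 = f p.2} => (p : Z × X).2)
      = F := by
    have : (fun p : {p : Z × X // (e : Z → Y) p.1 = f p.2} => (p : Z × X).2) ∘ φ
        = Subtype.val := rfl
    rw [show (G : Filter _) = (F₁ : Filter A).map φ from rfl, Filter.map_map, this]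
    exact congrArg Ultrafilter.toFilter hmapF₁
  rwa [Filter.Tendsto, this] at hsnd
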